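/- Let G be a 2K2-free graph with a minimum 2-factor F, C ∈ F, and xy ∈ E(C) a B-type edge (neither x nor y is adjacent to two consecutive vertices of any cycle in F other than C). Then for every cycle D ∈ F − {C}, the vertices of D alternate between non-neighbors of {x,y} and the rest; in particular, exactly half the vertices of D are adjacent to x or y. -/
import Mathlib


open SimpleGraph

variable {V : Type*}

/-- `G` has no induced `2K₂`. -/
def TwoK2Free (G : SimpleGraph V) : Prop :=
  ¬ ∃ a b c d : V, a ≠ b ∧ a ≠ c ∧ a ≠ d ∧ b ≠ c ∧ b ≠ d ∧ c ≠ d ∧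
      G.Adj a b ∧ G.Adj c d ∧ ¬G.Adj a c ∧ ¬G.Adj a d ∧ ¬G.Adj b c ∧ ¬G.Adj b d

/-- An independent set of vertices. -/
def IndepSet (G : SimpleGraph V) (s : Set V) : Prop :=
  s.Pairwise fun a b => ¬ G.Adj a b

/-- Number of connected components of `G - S`. -/
noncomputable def compCount [Fintype V] (G : SimpleGraph V) (S : Set V) : ℕ :=
  Nat.card ((G.induce Sᶜ).ConnectedComponent)

/-- `G` is `t`-tough. -/
def Tough [Fintype V] (t : ℝ) (G : SimpleGraph V) : Prop :=
  ∀ S : Set V, 2 ≤ compCount G S → t * (compCount G S : ℝ) ≤ (S.ncard : ℝ)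

/-- A family of `k` pairwise vertex-disjoint cycles in `G` covering all vertices,
i.e. the cycles of a 2-factor of `G`. -/
structure CycleFamily (G : SimpleGraph V) (k : ℕ) (n : Fin k → ℕ)
    (c : ∀ i : Fin k, ZMod (n i) → V) : Prop where
  three_le : ∀ i, 3 ≤ n i
  inj : ∀ i, Function.Injective (c i)
  adj : ∀ i j, G.Adj (c i j) (c i (j + 1))
  disj : ∀ i i' j j', c i j = c i' j' → i = i'
  spanning : ∀ v, ∃ i j, c i j = v

/-- A vertex `v` lying on cycle `i` of the family is of A-type if it is adjacent to two
consecutive vertices of some other cycle of the family. -/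
def AType {k : ℕ} {n : Fin k → ℕ} (G : SimpleGraph V)
    (c : ∀ i : Fin k, ZMod (n i) → V) (i : Fin k) (v : V) : Prop :=
  ∃ i' : Fin k, i' ≠ i ∧ ∃ j : ZMod (n i'), G.Adj v (c i' j) ∧ G.Adj v (c i' (j + 1))


lemma zmod_ne_add_one {N : ℕ} (hN : 3 ≤ N) (a : ZMod N) : a ≠ a + 1 := by
  haveI : NeZero N := ⟨by omega⟩
  haveI : Fact (1 < N) := ⟨by omega⟩
  intro h
  have h0 : (0 : ZMod N) = 1 := by
    have := h
    nth_rewrite 1 [← add_zero a] at this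
    exact add_left_cancel this
  have := congrArg ZMod.val h0
  rw [ZMod.val_zero, ZMod.val_one] at this
  omega

/-- reversing the orientation of one cycle of a family -/
lemma CycleFamily.reverse {G : SimpleGraph V} {k : ℕ} {n : Fin k → ℕ}
    {c : ∀ i, ZMod (n i) → V} (hF : CycleFamily G k n c) (iD : Fin k) :
    CycleFamily G k n (fun i z => if i = iD then c i (-z) else c i z) := by
  constructor
  · exact hF.three_le
  · intro i z z' h
    by_cases hi : i = iD <;> simp only [hi, if_pos, if_true, if_neg, if_false] at h
    · exact neg_injective (hF.inj i h)
    · exact hF.inj i h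
  · intro i z
    by_cases hi : i = iD <;> simp only [hi, if_pos, if_true, if_neg, if_false]
    · have h := (hF.adj i (-(z + 1))).symm
      have e : -(z + 1) + 1 = -z := by ring
      rwa [e] at h
    · exact hF.adj i z
  · intro i i' z z' h
    by_cases hi : i = iD <;> by_cases hi' : i' = iD <;>
      simp only [hi, hi', if_pos, if_true, if_neg, if_false] at h <;>
      exact hF.disj _ _ _ _ h
  · intro v
    obtain ⟨i, z, hz⟩ := hF.spanning v
    by_cases hi : i = iD
    · exact ⟨i, -z, by simp only [hi, if_true]; rwa [neg_neg]⟩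
    · exact ⟨i, z, by simp only [hi, if_false]; exact hz⟩

lemma zmod_cast_val_self {N : ℕ} [NeZero N] (a : ZMod N) : ((a.val : ℕ) : ZMod N) = a :=
  ZMod.natCast_rightInverse a

lemma zcast_eq {N N' : ℕ} [NeZero N] (h : N = N') (z : ZMod N) :
    (((z + 1).val : ℕ) : ZMod N') = ((z.val : ℕ) : ZMod N') + 1 := by
  subst h; rw [zmod_cast_val_self, zmod_cast_val_self]

lemma zcast_inj {N N' : ℕ} [NeZero N] (h : N = N') :
    Function.Injective (fun z : ZMod N => ((z.val : ℕ) : ZMod N')) := by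
  subst h; intro a b hab; simpa [zmod_cast_val_self] using hab

lemma zcast_surj {N N' : ℕ} [NeZero N] (h : N = N') :
    Function.Surjective (fun z : ZMod N => ((z.val : ℕ) : ZMod N')) := by
  subst h; exact fun b => ⟨b, zmod_cast_val_self b⟩

lemma zmod_last_eq_neg_one {N : ℕ} (h : 1 ≤ N) : ((N - 1 : ℕ) : ZMod N) = -1 := by
  have : ((N - 1 : ℕ) : ZMod N) + 1 = 0 := by
    rw [show ((1 : ZMod N)) = ((1 : ℕ) : ZMod N) by push_cast; ring, ← Nat.cast_add,
      show N - 1 + 1 = N by omega, ZMod.natCast_self]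
  linear_combination this

/-- merging two cycles of a family joined by a pair of crossing edges -/
lemma merge_family {G : SimpleGraph V} {m : ℕ} {n : Fin (m + 1) → ℕ}
    {c : ∀ i, ZMod (n i) → V} (hF : CycleFamily G (m + 1) n c)
    {iC iD : Fin (m + 1)} (hne : iD ≠ iC) {x : ZMod (n iC)} {j : ZMod (n iD)}
    (hxu : G.Adj (c iC x) (c iD j)) (hyu : G.Adj (c iC (x + 1)) (c iD (j + 1))) :
    ∃ (n' : Fin m → ℕ) (c' : ∀ i, ZMod (n' i) → V), CycleFamily G m n' c' := by
  have h3C : 3 ≤ n iC := hF.three_le iC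
  have h3D : 3 ≤ n iD := hF.three_le iD
  set M := n iC + n iD with hM
  haveI : NeZero (n iC) := ⟨by omega⟩
  haveI : NeZero (n iD) := ⟨by omega⟩
  haveI : NeZero M := ⟨by omega⟩
  haveI : Fact (1 < M) := ⟨by omega⟩
  -- the merged cycle
  set d : ZMod M → V := fun z =>
    if z.val < n iC then c iC (x + 1 + (z.val : ZMod (n iC)))
    else c iD (j - ((z.val - n iC : ℕ) : ZMod (n iD))) with hd
  have hvadd : ∀ w : ZMod M, (w + 1).val = (w.val + 1) % M := by
    intro w
    rw [ZMod.val_add, ZMod.val_one]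
  -- adjacency around d
  have hd_adj : ∀ w : ZMod M, G.Adj (d w) (d (w + 1)) := by
    intro w
    have hwlt : w.val < M := ZMod.val_lt w
    rcases lt_trichotomy (w.val + 1) (n iC) with h1 | h1 | h1
    · have hv : (w + 1).val = w.val + 1 := by rw [hvadd]; exact Nat.mod_eq_of_lt (by omega)
      have e1 : d w = c iC (x + 1 + (w.val : ZMod (n iC))) := by
        rw [hd]; simp only [if_pos (show w.val < n iC by omega)]
      have e2 : d (w + 1) = c iC (x + 1 + (w.val : ZMod (n iC)) + 1) := by
        rw [hd]; simp only [hv, if_pos h1]; push_cast; ring_nf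
      rw [e1, e2]; exact hF.adj iC _
    · have hv : (w + 1).val = n iC := by rw [hvadd, h1]; exact Nat.mod_eq_of_lt (by omega)
      have e1 : d w = c iC x := by
        rw [hd]; simp only [if_pos (show w.val < n iC by omega)]
        rw [show w.val = n iC - 1 by omega, zmod_last_eq_neg_one (by omega)]
        ring_nf
      have e2 : d (w + 1) = c iD j := by
        rw [hd]; simp only [hv, if_neg (lt_irrefl (n iC))]
        simp
      rw [e1, e2]; exact hxu
    · have hge : n iC ≤ w.val := by omega
      rcases eq_or_lt_of_le (show w.val + 1 ≤ M by omega) with h2 | h2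
      · have hv : (w + 1).val = 0 := by rw [hvadd, h2]; simp
        have e1 : d w = c iD (j + 1) := by
          rw [hd]; simp only [if_neg (show ¬ w.val < n iC by omega)]
          rw [show w.val - n iC = n iD - 1 by omega, zmod_last_eq_neg_one (by omega)]
          ring_nf
        have e2 : d (w + 1) = c iC (x + 1) := by
          rw [hd]; simp only [hv, if_pos (show 0 < n iC by omega)]
          norm_num
        rw [e1, e2]; exact hyu.symm
      · have hv : (w + 1).val = w.val + 1 := by rw [hvadd]; exact Nat.mod_eq_of_lt h2
        have e1 : d w = c iD (j - ((w.val - n iC : ℕ) : ZMod (n iD))) := by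
          rw [hd]; simp only [if_neg (show ¬ w.val < n iC by omega)]
        have e2 : d (w + 1) = c iD (j - ((w.val - n iC : ℕ) : ZMod (n iD)) - 1) := by
          rw [hd]; simp only [hv, if_neg (show ¬ w.val + 1 < n iC by omega)]
          rw [show w.val + 1 - n iC = (w.val - n iC) + 1 by omega]
          push_cast; ring_nf
        rw [e1, e2]
        have h := (hF.adj iD (j - ((w.val - n iC : ℕ) : ZMod (n iD)) - 1)).symm
        rwa [sub_add_cancel] at h
  -- injectivity of d
  have hd_inj : Function.Injective d := by
    intro w w' h
    have hwlt : w.val < M := ZMod.val_lt w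
    have hwlt' : w'.val < M := ZMod.val_lt w'
    by_cases h1 : w.val < n iC <;> by_cases h2 : w'.val < n iC <;>
      rw [hd] at h <;> simp only [if_pos, if_neg, h1, h2, if_true, if_false] at h
    · have e : ((w.val : ℕ) : ZMod (n iC)) = ((w'.val : ℕ) : ZMod (n iC)) :=
        add_left_cancel (hF.inj iC h)
      have := congrArg ZMod.val e
      rw [ZMod.val_cast_of_lt h1, ZMod.val_cast_of_lt h2] at this
      exact ZMod.val_injective M this
    · exact absurd (hF.disj iC iD _ _ h) (fun hc => hne hc.symm)
    · exact absurd (hF.disj iD iC _ _ h) hne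
    · have e : ((w.val - n iC : ℕ) : ZMod (n iD)) = ((w'.val - n iC : ℕ) : ZMod (n iD)) :=
        sub_right_injective (hF.inj iD h)
      have := congrArg ZMod.val e
      rw [ZMod.val_cast_of_lt (by omega), ZMod.val_cast_of_lt (by omega)] at this
      exact ZMod.val_injective M (by omega)
  -- range of d
  have hd_spanC : ∀ t : ZMod (n iC), ∃ w, d w = c iC t := by
    intro t
    refine ⟨(((t - (x + 1)).val : ℕ) : ZMod M), ?_⟩
    have ha : (t - (x + 1)).val < n iC := ZMod.val_lt _
    have hv : ((((t - (x + 1)).val : ℕ) : ZMod M)).val = (t - (x + 1)).val :=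
      ZMod.val_cast_of_lt (by omega)
    rw [hd]; simp only [hv, if_pos ha]
    rw [zmod_cast_val_self]
    ring_nf
  have hd_spanD : ∀ t : ZMod (n iD), ∃ w, d w = c iD t := by
    intro t
    refine ⟨((n iC + (j - t).val : ℕ) : ZMod M), ?_⟩
    have ha : (j - t).val < n iD := ZMod.val_lt _
    have hv : (((n iC + (j - t).val : ℕ) : ZMod M)).val = n iC + (j - t).val :=
      ZMod.val_cast_of_lt (by omega)
    rw [hd]; simp only [hv, if_neg (show ¬ n iC + (j - t).val < n iC by omega)]
    rw [show n iC + (j - t).val - n iC = (j - t).val by omega, zmod_cast_val_self]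
    ring_nf
  have hrange : ∀ w : ZMod M, (∃ t, d w = c iC t) ∨ (∃ t, d w = c iD t) := by
    intro w
    by_cases hw : w.val < n iC
    · exact Or.inl ⟨x + 1 + (w.val : ZMod (n iC)), by rw [hd]; simp only [if_pos hw]⟩
    · exact Or.inr ⟨j - ((w.val - n iC : ℕ) : ZMod (n iD)), by rw [hd]; simp only [if_neg hw]⟩
  -- indexing
  set g : Fin m → Fin (m + 1) := iD.succAbove with hg
  obtain ⟨iC', hiC'⟩ := Fin.exists_succAbove_eq (show iC ≠ iD from fun h => hne h.symm)
  set n' : Fin m → ℕ := fun i => if i = iC' then M else n (g i) with hn'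
  set c' : ∀ i : Fin m, ZMod (n' i) → V := fun i z =>
    if i = iC' then d ((z.val : ℕ) : ZMod M) else c (g i) ((z.val : ℕ) : ZMod (n (g i))) with hc'
  have hn'C : n' iC' = M := by rw [hn']; simp
  have hn'g : ∀ i, i ≠ iC' → n' i = n (g i) := by intro i hi; rw [hn']; simp [hi]
  refine ⟨n', c', ?_⟩
  constructor
  · intro i
    by_cases hi : i = iC'
    · rw [hi, hn'C]; omega
    · rw [hn'g i hi]; exact hF.three_le _
  · intro i
    by_cases hi : i = iC'
    · subst hi
      haveI : NeZero (n' i) := ⟨by rw [hn'C]; omega⟩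
      intro z z' h
      rw [hc'] at h; simp only [if_pos] at h
      exact zcast_inj hn'C (hd_inj h)
    · haveI : NeZero (n' i) := ⟨by rw [hn'g i hi]; have := hF.three_le (g i); omega⟩
      intro z z' h
      rw [hc'] at h; simp only [if_neg hi] at h
      exact zcast_inj (hn'g i hi) (hF.inj (g i) h)
  · intro i z
    by_cases hi : i = iC'
    · subst hi
      haveI : NeZero (n' i) := ⟨by rw [hn'C]; omega⟩
      rw [hc']; simp only [if_pos]
      rw [zcast_eq hn'C]
      exact hd_adj _
    · haveI : NeZero (n' i) := ⟨by rw [hn'g i hi]; have := hF.three_le (g i); omega⟩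
      rw [hc']; simp only [if_neg hi]
      rw [zcast_eq (hn'g i hi)]
      exact hF.adj (g i) _
  · intro i i' z z' h
    by_cases hi : i = iC' <;> by_cases hi' : i' = iC'
    · rw [hi, hi']
    · exfalso
      subst hi
      rw [hc'] at h; simp only [if_pos, if_neg hi', if_true] at h
      rcases hrange ((z.val : ℕ) : ZMod M) with ⟨t, ht⟩ | ⟨t, ht⟩
      · rw [ht] at h
        have h2 := hF.disj iC (g i') _ _ h
        exact hi' (Fin.succAbove_right_injective (p := iD) (h2.symm.trans hiC'.symm))
      · rw [ht] at h
        have h2 := hF.disj iD (g i') _ _ h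
        exact Fin.succAbove_ne iD i' h2.symm
    · exfalso
      subst hi'
      rw [hc'] at h; simp only [if_pos, if_neg hi, if_true] at h
      rcases hrange ((z'.val : ℕ) : ZMod M) with ⟨t, ht⟩ | ⟨t, ht⟩
      · rw [ht] at h
        have h2 := hF.disj (g i) iC _ _ h
        exact hi (Fin.succAbove_right_injective (p := iD) (h2.trans hiC'.symm))
      · rw [ht] at h
        have h2 := hF.disj (g i) iD _ _ h
        exact Fin.succAbove_ne iD i h2
    · rw [hc'] at h; simp only [if_neg hi, if_neg hi'] at h
      exact Fin.succAbove_right_injective (p := iD) (hF.disj (g i) (g i') _ _ h)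
  · intro v
    obtain ⟨i0, t, ht⟩ := hF.spanning v
    by_cases h0 : i0 = iC
    · subst h0
      obtain ⟨w, hw⟩ := hd_spanC t
      haveI : NeZero (n' iC') := ⟨by rw [hn'C]; omega⟩
      obtain ⟨z, hz⟩ := zcast_surj hn'C w
      refine ⟨iC', z, ?_⟩
      rw [hc']; simp only [if_pos]
      rw [show ((z.val : ℕ) : ZMod M) = w from hz, hw, ht]
    · by_cases h0' : i0 = iD
      · subst h0'
        obtain ⟨w, hw⟩ := hd_spanD t
        haveI : NeZero (n' iC') := ⟨by rw [hn'C]; omega⟩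
        obtain ⟨z, hz⟩ := zcast_surj hn'C w
        refine ⟨iC', z, ?_⟩
        rw [hc']; simp only [if_pos]
        rw [show ((z.val : ℕ) : ZMod M) = w from hz, hw, ht]
      · obtain ⟨i1, hi1⟩ := Fin.exists_succAbove_eq (show i0 ≠ iD from h0')
        have hi1C : i1 ≠ iC' := by
          intro hh
          exact h0 (by rw [← hi1, hh, hiC'])
        have hgi1 : g i1 = i0 := hi1
        subst hgi1
        haveI : NeZero (n (g i1)) := ⟨by have := hF.three_le (g i1); omega⟩
        haveI : NeZero (n' i1) := ⟨by rw [hn'g i1 hi1C]; have := hF.three_le (g i1); omega⟩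
        obtain ⟨z, hz⟩ := zcast_surj (hn'g i1 hi1C) t
        refine ⟨i1, z, ?_⟩
        rw [hc']; simp only [if_neg hi1C]
        rw [show ((z.val : ℕ) : ZMod (n (g i1))) = t from hz, ht]

theorem btype_edge_alternating (G : SimpleGraph V) (h2k2 : TwoK2Free G)
    (k : ℕ) (n : Fin k → ℕ) (c : ∀ i : Fin k, ZMod (n i) → V)
    (hF : CycleFamily G k n c)
    (hmin : ∀ (k' : ℕ) (n' : Fin k' → ℕ) (c' : ∀ i : Fin k', ZMod (n' i) → V),
      CycleFamily G k' n' c' → k ≤ k')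
    (iC : Fin k) (x : ZMod (n iC))
    (hxB : ¬ AType G c iC (c iC x)) (hyB : ¬ AType G c iC (c iC (x + 1))) :
    ∀ iD : Fin k, iD ≠ iC →
      (∀ j : ZMod (n iD),
        (G.Adj (c iC x) (c iD j) ∨ G.Adj (c iC (x + 1)) (c iD j)) ↔
          ¬ (G.Adj (c iC x) (c iD (j + 1)) ∨ G.Adj (c iC (x + 1)) (c iD (j + 1)))) ∧
      2 * {v | (∃ j, c iD j = v) ∧
            (G.Adj (c iC x) v ∨ G.Adj (c iC (x + 1)) v)}.ncard = n iD := by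
  intro iD hiD
  have hk : 0 < k := iC.pos
  obtain ⟨m, rfl⟩ : ∃ m, k = m + 1 := ⟨k - 1, by omega⟩
  have h3C := hF.three_le iC
  have h3D := hF.three_le iD
  haveI : NeZero (n iD) := ⟨by omega⟩
  have hiCD : iC ≠ iD := fun h => hiD h.symm
  have halt : ∀ j : ZMod (n iD),
      (G.Adj (c iC x) (c iD j) ∨ G.Adj (c iC (x + 1)) (c iD j)) ↔
        ¬ (G.Adj (c iC x) (c iD (j + 1)) ∨ G.Adj (c iC (x + 1)) (c iD (j + 1))) := by
    intro j
    have claim1 : (G.Adj (c iC x) (c iD j) ∨ G.Adj (c iC (x + 1)) (c iD j)) ∨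
        (G.Adj (c iC x) (c iD (j + 1)) ∨ G.Adj (c iC (x + 1)) (c iD (j + 1))) := by
      by_contra hcon
      push_neg at hcon
      obtain ⟨⟨ha, hb⟩, hc, hd⟩ := hcon
      refine h2k2 ⟨c iC x, c iC (x + 1), c iD j, c iD (j + 1), ?_, ?_, ?_, ?_, ?_, ?_,
        hF.adj iC x, hF.adj iD j, ha, hc, hb, hd⟩
      · exact fun h => zmod_ne_add_one h3C x (hF.inj iC h)
      · exact fun h => hiCD (hF.disj iC iD _ _ h)
      · exact fun h => hiCD (hF.disj iC iD _ _ h)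
      · exact fun h => hiCD (hF.disj iC iD _ _ h)
      · exact fun h => hiCD (hF.disj iC iD _ _ h)
      · exact fun h => zmod_ne_add_one h3D j (hF.inj iD h)
    have claim2 : ¬ ((G.Adj (c iC x) (c iD j) ∨ G.Adj (c iC (x + 1)) (c iD j)) ∧
        (G.Adj (c iC x) (c iD (j + 1)) ∨ G.Adj (c iC (x + 1)) (c iD (j + 1)))) := by
      rintro ⟨h1 | h1, h2 | h2⟩
      · exact hxB ⟨iD, hiD, j, h1, h2⟩
      · obtain ⟨n', c', hf'⟩ := merge_family hF hiD h1 h2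
        have := hmin m n' c' hf'
        omega
      · have hadj1 : G.Adj ((fun i z => if i = iD then c i (-z) else c i z) iC x)
            ((fun i z => if i = iD then c i (-z) else c i z) iD (-(j + 1))) := by
          simpa [hiCD] using h2
        have hadj2 : G.Adj ((fun i z => if i = iD then c i (-z) else c i z) iC (x + 1))
            ((fun i z => if i = iD then c i (-z) else c i z) iD (-(j + 1) + 1)) := by
          have e : (-(-(j + 1) + 1) : ZMod (n iD)) = j := by ring
          simp only [if_neg hiCD, if_pos rfl]
          rw [e]
          exact h1
        obtain ⟨n', c', hf'⟩ := merge_family (hF.reverse iD) hiD hadj1 hadj2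
        have := hmin m n' c' hf'
        omega
      · exact hyB ⟨iD, hiD, j, h1, h2⟩
    exact ⟨fun h h' => claim2 ⟨h, h'⟩, fun h => claim1.resolve_right h⟩
  refine ⟨halt, ?_⟩
  have him : {v | (∃ j, c iD j = v) ∧ (G.Adj (c iC x) v ∨ G.Adj (c iC (x + 1)) v)}
      = c iD '' {j | G.Adj (c iC x) (c iD j) ∨ G.Adj (c iC (x + 1)) (c iD j)} := by
    ext v
    constructor
    · rintro ⟨⟨j, rfl⟩, hv⟩
      exact ⟨j, hv, rfl⟩
    · rintro ⟨j, hj, rfl⟩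
      exact ⟨⟨j, rfl⟩, hj⟩
  rw [him, Set.ncard_image_of_injective _ (hF.inj iD)]
  set S : Set (ZMod (n iD)) :=
    {j | G.Adj (c iC x) (c iD j) ∨ G.Adj (c iC (x + 1)) (c iD j)} with hS
  have hcompl : Sᶜ = (fun j => j + 1) '' S := by
    ext j
    simp only [Set.mem_compl_iff, Set.mem_image, hS, Set.mem_setOf_eq]
    constructor
    · intro hj
      refine ⟨j - 1, ?_, sub_add_cancel j 1⟩
      have h := halt (j - 1)
      rw [sub_add_cancel] at h
      exact h.mpr hj
    · rintro ⟨a, ha, rfl⟩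
      exact (halt a).mp ha
  have h1 : S.ncard = Sᶜ.ncard := by
    rw [hcompl, Set.ncard_image_of_injective _ (add_left_injective 1)]
  have h2 : S.ncard + Sᶜ.ncard = Nat.card (ZMod (n iD)) := Set.ncard_add_ncard_compl S
  rw [Nat.card_zmod] at h2
  omega
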